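/- Let n be a positive integer, let H be an n×n complex Hermitian matrix, let b ∈ ℂⁿ, and let T, R > 0. Then ‖∫_ℝ Λ_T(σ)·exp(−i·σ·H)·b dσ − ∫_{−R}^{R} Λ_T(σ)·exp(−i·σ·H)·b dσ‖ ≤ (4·T·√T/(√π·R))·e^{−R²/(4T)}·‖b‖. -/

import Mathlib

open MeasureTheory Real Matrix Complex
open Set

section gauss
variable {T : ℝ}

lemma gauss_hasDeriv (hT : 0 < T) (s : ℝ) :
    HasDerivAt (fun s : ℝ => -(2*T) * Real.exp (-s^2/(4*T))) (Real.exp (-s^2/(4*T)) * s) s := by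
  have h1 : HasDerivAt (fun s : ℝ => -s^2/(4*T)) (-(2*s)/(4*T)) s := by
    simpa using (((hasDerivAt_pow 2 s).neg).div_const (4*T))
  have h2 := (h1.exp).const_mul (-(2*T))
  refine h2.congr_deriv ?_
  rw [mul_div_assoc', mul_div_assoc', div_eq_iff (by positivity)]
  ring

lemma gauss_tendsto (hT : 0 < T) :
    Filter.Tendsto (fun s : ℝ => -(2*T) * Real.exp (-s^2/(4*T))) Filter.atTop (nhds 0) := by
  have h1 : Filter.Tendsto (fun s : ℝ => -s^2/(4*T)) Filter.atTop Filter.atBot := by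
    apply Filter.Tendsto.atBot_div_const (by positivity)
    simpa using (Filter.tendsto_pow_atTop (two_ne_zero)).neg
  have h2 := (Real.tendsto_exp_atBot.comp h1).const_mul (-(2*T))
  simpa using h2

lemma gauss_moment_integrableOn (hT : 0 < T) (σ : ℝ) (hσ : 0 ≤ σ) :
    IntegrableOn (fun s => Real.exp (-s^2/(4*T)) * s) (Ioi σ) := by
  refine integrableOn_Ioi_deriv_of_nonneg' (fun x _ => gauss_hasDeriv hT x)
    (fun x hx => mul_nonneg (Real.exp_pos _).le (le_trans hσ hx.le)) (gauss_tendsto hT)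

lemma gauss_moment_eq (hT : 0 < T) (σ : ℝ) (hσ : 0 ≤ σ) :
    ∫ s in Ioi σ, Real.exp (-s^2/(4*T)) * s = 2*T*Real.exp (-σ^2/(4*T)) := by
  rw [integral_Ioi_of_hasDerivAt_of_nonneg' (fun x _ => gauss_hasDeriv hT x)
    (fun x hx => mul_nonneg (Real.exp_pos _).le (le_trans hσ hx.le)) (gauss_tendsto hT)]
  ring

lemma gauss_integrable (hT : 0 < T) :
    Integrable (fun s : ℝ => Real.exp (-s^2/(4*T))) := by
  have hb : (0:ℝ) < (4*T)⁻¹ := by positivity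
  have := integrable_exp_neg_mul_sq hb
  refine this.congr ?_
  filter_upwards with s
  congr 1
  ring

lemma gauss_mul_integrable (hT : 0 < T) :
    Integrable (fun s : ℝ => Real.exp (-s^2/(4*T)) * s) := by
  have hb : (0:ℝ) < (4*T)⁻¹ := by positivity
  have := integrable_mul_exp_neg_mul_sq hb
  refine this.congr ?_
  filter_upwards with s
  rw [mul_comm]
  congr 1
  ring

lemma gauss_tail (hT : 0 < T) {R : ℝ} (hR : 0 < R) :
    ∫ σ in Ioi R, Real.exp (-σ^2/(4*T)) ≤ (2*T/R) * Real.exp (-R^2/(4*T)) := by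
  have h1 : ∫ σ in Ioi R, Real.exp (-σ^2/(4*T))
      ≤ ∫ σ in Ioi R, (1/R) * (Real.exp (-σ^2/(4*T)) * σ) := by
    refine setIntegral_mono_on (gauss_integrable hT).integrableOn
      (((gauss_moment_integrableOn hT R hR.le)).const_mul (1/R)) measurableSet_Ioi ?_
    intro x hx
    have hx' : R < x := hx
    rw [one_div, ← mul_assoc, mul_comm R⁻¹, mul_assoc]
    nth_rewrite 1 [← mul_one (Real.exp (-x^2/(4*T)))]
    refine mul_le_mul_of_nonneg_left ?_ (Real.exp_pos _).le
    calc (1:ℝ) = R⁻¹ * R := (inv_mul_cancel₀ hR.ne').symm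
      _ ≤ R⁻¹ * x := mul_le_mul_of_nonneg_left hx'.le (by positivity)
  calc ∫ σ in Ioi R, Real.exp (-σ^2/(4*T))
      ≤ ∫ σ in Ioi R, (1/R) * (Real.exp (-σ^2/(4*T)) * σ) := h1
    _ = (1/R) * ∫ σ in Ioi R, Real.exp (-σ^2/(4*T)) * σ := by rw [MeasureTheory.integral_const_mul]
    _ = (1/R) * (2*T*Real.exp (-R^2/(4*T))) := by rw [gauss_moment_eq hT R hR.le]
    _ = (2*T/R) * Real.exp (-R^2/(4*T)) := by ring

end gauss

/-- The kernel `Λ_T` arising from the Gaussian average of the Duhamel term in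
the Kannai transform of an inhomogeneous diffusion equation. -/
noncomputable def Lambda (T σ : ℝ) : ℝ :=
  if 0 ≤ σ then
    (Real.sqrt (4 * Real.pi * T))⁻¹ *
      ∫ s in Set.Ioi σ, Real.exp (-s ^ 2 / (4 * T)) * (s - σ)
  else
    (Real.sqrt (4 * Real.pi * T))⁻¹ *
      ∫ s in Set.Iio σ, Real.exp (-s ^ 2 / (4 * T)) * (s - σ)

section lambda
variable {T : ℝ}

lemma lambda_integrand_integrableOn (hT : 0 < T) (σ : ℝ) :
    IntegrableOn (fun s => Real.exp (-s^2/(4*T)) * (s - σ)) (Ioi σ) := by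
  have h1 : IntegrableOn (fun s => Real.exp (-s^2/(4*T)) * s
      - σ * Real.exp (-s^2/(4*T))) (Ioi σ) :=
    (gauss_mul_integrable hT).integrableOn.sub (((gauss_integrable hT).const_mul σ).integrableOn)
  refine h1.congr_fun (fun s _ => by ring) measurableSet_Ioi

lemma lambda_integrand_integrableOn' (hT : 0 < T) (σ : ℝ) :
    IntegrableOn (fun s => Real.exp (-s^2/(4*T)) * (s - σ)) (Iio σ) := by
  have h1 : IntegrableOn (fun s => Real.exp (-s^2/(4*T)) * s
      - σ * Real.exp (-s^2/(4*T))) (Iio σ) :=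
    (gauss_mul_integrable hT).integrableOn.sub (((gauss_integrable hT).const_mul σ).integrableOn)
  refine h1.congr_fun (fun s _ => by ring) measurableSet_Iio

lemma lambda_nonneg_of_nonneg (hT : 0 < T) {σ : ℝ} (hσ : 0 ≤ σ) : 0 ≤ Lambda T σ := by
  rw [Lambda, if_pos hσ]
  refine mul_nonneg (by positivity) ?_
  refine setIntegral_nonneg measurableSet_Ioi (fun s hs => ?_)
  have : σ < s := hs
  exact mul_nonneg (Real.exp_pos _).le (by linarith)

lemma lambda_le_of_nonneg (hT : 0 < T) {σ : ℝ} (hσ : 0 ≤ σ) :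
    Lambda T σ ≤ (Real.sqrt (4 * Real.pi * T))⁻¹ * (2*T*Real.exp (-σ^2/(4*T))) := by
  rw [Lambda, if_pos hσ]
  refine mul_le_mul_of_nonneg_left ?_ (by positivity)
  rw [← gauss_moment_eq hT σ hσ]
  refine setIntegral_mono_on (lambda_integrand_integrableOn hT σ)
    (gauss_moment_integrableOn hT σ hσ) measurableSet_Ioi (fun s hs => ?_)
  have : σ < s := hs
  refine mul_le_mul_of_nonneg_left (by linarith) (Real.exp_pos _).le

lemma lambda_neg_eq (hT : 0 < T) {σ : ℝ} (hσ : σ < 0) : Lambda T σ = -(Lambda T (-σ)) := by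
  rw [Lambda, Lambda, if_neg (not_le.mpr hσ), if_pos (by linarith : (0:ℝ) ≤ -σ)]
  rw [← mul_neg]
  congr 1
  rw [← integral_Iic_eq_integral_Iio]
  have key := integral_comp_neg_Iic σ
    (fun x => Real.exp (-(-x)^2/(4*T)) * ((-x) - σ))
  simp only [neg_neg] at key
  rw [key, ← MeasureTheory.integral_neg]
  refine setIntegral_congr_fun measurableSet_Ioi (fun s _ => ?_)
  have h2 : (-(-s^2)) = s^2 := by ring
  rw [neg_sq]
  ring

lemma abs_lambda_le (hT : 0 < T) (σ : ℝ) :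
    |Lambda T σ| ≤ (Real.sqrt (4 * Real.pi * T))⁻¹ * (2*T*Real.exp (-σ^2/(4*T))) := by
  rcases le_or_gt 0 σ with hσ | hσ
  · rw [_root_.abs_of_nonneg (lambda_nonneg_of_nonneg hT hσ)]
    exact lambda_le_of_nonneg hT hσ
  · rw [lambda_neg_eq hT hσ, abs_neg,
      _root_.abs_of_nonneg (lambda_nonneg_of_nonneg hT (by linarith : (0:ℝ) ≤ -σ))]
    have := lambda_le_of_nonneg hT (by linarith : (0:ℝ) ≤ -σ)
    simpa [neg_sq] using this

end lambda

section meas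
variable {T : ℝ}

lemma cont_integral_Iic {g : ℝ → ℝ} (hg : Integrable g) :
    Continuous fun σ : ℝ => ∫ s in Iic σ, g s := by
  have h1 : ∀ σ : ℝ, ∫ s in Iic σ, g s = (∫ s in Iic (0:ℝ), g s) + ∫ s in (0:ℝ)..σ, g s := by
    intro σ
    rw [← intervalIntegral.integral_Iic_sub_Iic hg.integrableOn hg.integrableOn]
    ring
  rw [show (fun σ : ℝ => ∫ s in Iic σ, g s)
      = fun σ : ℝ => (∫ s in Iic (0:ℝ), g s) + ∫ s in (0:ℝ)..σ, g s from funext h1]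
  exact continuous_const.add
    (intervalIntegral.continuous_primitive (fun a b => hg.intervalIntegrable) 0)

lemma cont_integral_Ioi {g : ℝ → ℝ} (hg : Integrable g) :
    Continuous fun σ : ℝ => ∫ s in Ioi σ, g s := by
  have h1 : ∀ σ : ℝ, ∫ s in Ioi σ, g s = (∫ s, g s) - ∫ s in Iic σ, g s := by
    intro σ
    have := MeasureTheory.integral_add_compl (measurableSet_Iic (a := σ)) hg
    rw [compl_Iic] at this
    linarith
  rw [show (fun σ : ℝ => ∫ s in Ioi σ, g s)
      = fun σ : ℝ => (∫ s, g s) - ∫ s in Iic σ, g s from funext h1]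
  exact continuous_const.sub (cont_integral_Iic hg)

lemma lambda_measurable (hT : 0 < T) : Measurable (Lambda T) := by
  have hc1 : Continuous fun σ : ℝ => (Real.sqrt (4 * Real.pi * T))⁻¹ *
      ((∫ s in Ioi σ, Real.exp (-s^2/(4*T)) * s) - σ * ∫ s in Ioi σ, Real.exp (-s^2/(4*T))) :=
    continuous_const.mul ((cont_integral_Ioi (gauss_mul_integrable hT)).sub
      (continuous_id.mul (cont_integral_Ioi (gauss_integrable hT))))
  have hc2 : Continuous fun σ : ℝ => (Real.sqrt (4 * Real.pi * T))⁻¹ *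
      ((∫ s in Iio σ, Real.exp (-s^2/(4*T)) * s) - σ * ∫ s in Iio σ, Real.exp (-s^2/(4*T))) := by
    have e1 : ∀ σ : ℝ, (∫ s in Iio σ, Real.exp (-s^2/(4*T)) * s)
        = ∫ s in Iic σ, Real.exp (-s^2/(4*T)) * s := fun σ => (integral_Iic_eq_integral_Iio).symm
    have e2 : ∀ σ : ℝ, (∫ s in Iio σ, Real.exp (-s^2/(4*T)))
        = ∫ s in Iic σ, Real.exp (-s^2/(4*T)) := fun σ => (integral_Iic_eq_integral_Iio).symm
    simp only [e1, e2]
    exact continuous_const.mul ((cont_integral_Iic (gauss_mul_integrable hT)).sub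
      (continuous_id.mul (cont_integral_Iic (gauss_integrable hT))))
  have key1 : ∀ σ : ℝ, (∫ s in Ioi σ, Real.exp (-s^2/(4*T)) * (s - σ))
      = (∫ s in Ioi σ, Real.exp (-s^2/(4*T)) * s) - σ * ∫ s in Ioi σ, Real.exp (-s^2/(4*T)) := by
    intro σ
    rw [← MeasureTheory.integral_const_mul, ← MeasureTheory.integral_sub
      (gauss_mul_integrable hT).integrableOn (((gauss_integrable hT).const_mul σ).integrableOn)]
    refine setIntegral_congr_fun measurableSet_Ioi (fun s _ => by ring)
  have key2 : ∀ σ : ℝ, (∫ s in Iio σ, Real.exp (-s^2/(4*T)) * (s - σ))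
      = (∫ s in Iio σ, Real.exp (-s^2/(4*T)) * s) - σ * ∫ s in Iio σ, Real.exp (-s^2/(4*T)) := by
    intro σ
    rw [← MeasureTheory.integral_const_mul, ← MeasureTheory.integral_sub
      (gauss_mul_integrable hT).integrableOn (((gauss_integrable hT).const_mul σ).integrableOn)]
    refine setIntegral_congr_fun measurableSet_Iio (fun s _ => by ring)
  have : Lambda T = fun σ => if 0 ≤ σ then
      (Real.sqrt (4 * Real.pi * T))⁻¹ *
        ((∫ s in Ioi σ, Real.exp (-s^2/(4*T)) * s) - σ * ∫ s in Ioi σ, Real.exp (-s^2/(4*T)))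
    else
      (Real.sqrt (4 * Real.pi * T))⁻¹ *
        ((∫ s in Iio σ, Real.exp (-s^2/(4*T)) * s) - σ * ∫ s in Iio σ, Real.exp (-s^2/(4*T))) := by
    funext σ
    rw [Lambda]
    split_ifs
    · rw [key1]
    · rw [key2]
  rw [this]
  exact Measurable.ite (measurableSet_Ici (a := (0:ℝ)))
    hc1.measurable hc2.measurable

end meas

section main
variable {n : ℕ}

lemma norm_exp_apply (n : ℕ) (H : Matrix (Fin n) (Fin n) ℂ) (hH : H.IsHermitian)
    (b : EuclideanSpace ℂ (Fin n)) (σ : ℝ) :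
    ‖Matrix.toEuclideanCLM (𝕜 := ℂ) (NormedSpace.exp (-(Complex.I * (σ : ℂ)) • H)) b‖ = ‖b‖ := by
  set M := -(Complex.I * (σ : ℂ)) • H with hM
  have hstar : star M = -M := by
    rw [hM, star_smul, Matrix.star_eq_conjTranspose, hH.eq, ← neg_smul]
    congr 1
    simp [Complex.ext_iff]
  have h1 : star (NormedSpace.exp M) = NormedSpace.exp (-M) := by
    rw [Matrix.star_eq_conjTranspose, ← Matrix.exp_conjTranspose,
      ← Matrix.star_eq_conjTranspose, hstar]
  have hMexp : star (NormedSpace.exp M) * NormedSpace.exp M = 1 := by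
    rw [h1, ← Matrix.exp_add_of_commute (-M) M (Commute.neg_left rfl),
      neg_add_cancel, NormedSpace.exp_zero]
  have hMexp' : NormedSpace.exp M * star (NormedSpace.exp M) = 1 := by
    rw [h1, ← Matrix.exp_add_of_commute M (-M) (Commute.neg_right rfl),
      add_neg_cancel, NormedSpace.exp_zero]
  set e := Matrix.toEuclideanCLM (𝕜 := ℂ) (n := Fin n)
  have hu : e (NormedSpace.exp M) ∈
      unitary (EuclideanSpace ℂ (Fin n) →L[ℂ] EuclideanSpace ℂ (Fin n)) := by
    constructor
    · rw [← map_star, ← _root_.map_mul, hMexp, _root_.map_one]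
    · rw [← map_star, ← _root_.map_mul, hMexp', _root_.map_one]
  exact ContinuousLinearMap.norm_map_of_mem_unitary hu b

lemma cont_exp_apply (n : ℕ) (H : Matrix (Fin n) (Fin n) ℂ) (b : EuclideanSpace ℂ (Fin n)) :
    Continuous fun σ : ℝ =>
      Matrix.toEuclideanCLM (𝕜 := ℂ) (NormedSpace.exp (-(Complex.I * (σ : ℂ)) • H)) b := by
  set e := Matrix.toEuclideanCLM (𝕜 := ℂ) (n := Fin n)
  have hcont : Continuous ⇑e :=
    LinearMap.continuous_of_finiteDimensional
      ({ toFun := ⇑e, map_add' := map_add e, map_smul' := map_smul e } :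
        Matrix (Fin n) (Fin n) ℂ →ₗ[ℂ] _)
  have hmap : ∀ σ : ℝ, e (NormedSpace.exp (-(Complex.I * (σ : ℂ)) • H))
      = NormedSpace.exp ((-(Complex.I * (σ : ℂ))) • e H) := by
    intro σ
    letI : SeminormedRing (Matrix (Fin n) (Fin n) ℂ) := Matrix.linftyOpSemiNormedRing
    letI : NormedRing (Matrix (Fin n) (Fin n) ℂ) := Matrix.linftyOpNormedRing
    letI : NormedAlgebra ℂ (Matrix (Fin n) (Fin n) ℂ) := Matrix.linftyOpNormedAlgebra
    letI : NormedAlgebra ℚ (Matrix (Fin n) (Fin n) ℂ) := NormedAlgebra.restrictScalars ℚ ℂ _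
    have := NormedSpace.map_exp e hcont (-(Complex.I * (σ : ℂ)) • H)
    rw [_root_.map_smul] at this
    exact this
  simp only [hmap]
  have hW : Continuous fun σ : ℝ => NormedSpace.exp ((-(Complex.I * (σ : ℂ))) • e H) := by
    letI : NormedAlgebra ℚ (EuclideanSpace ℂ (Fin n) →L[ℂ] EuclideanSpace ℂ (Fin n)) := NormedAlgebra.restrictScalars ℚ ℂ _
    refine NormedSpace.exp_continuous.comp ?_
    exact ((continuous_const.mul Complex.continuous_ofReal).neg).smul continuous_const
  exact hW.clm_apply continuous_const

end main

/-- Gaussian truncation error for the inhomogeneous Kannai integral: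
truncating `∫ Λ_T(σ) e^{-iσH} b dσ` to `[-R, R]` incurs an error of at most
`(4 T √T/(√π R)) e^{-R²/(4T)} ‖b‖`. -/
theorem kannai_truncation_inhomogeneous
    (n : ℕ) (hn : 0 < n) (H : Matrix (Fin n) (Fin n) ℂ) (hH : H.IsHermitian)
    (b : EuclideanSpace ℂ (Fin n)) (T R : ℝ) (hT : 0 < T) (hR : 0 < R) :
    ‖(∫ σ : ℝ, Lambda T σ •
          Matrix.toEuclideanCLM (𝕜 := ℂ) (NormedSpace.exp (-(Complex.I * (σ : ℂ)) • H)) b) -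
        ∫ σ in (-R : ℝ)..R, Lambda T σ •
          Matrix.toEuclideanCLM (𝕜 := ℂ) (NormedSpace.exp (-(Complex.I * (σ : ℂ)) • H)) b‖ ≤
      (4 * T * Real.sqrt T / (Real.sqrt Real.pi * R)) * Real.exp (-R ^ 2 / (4 * T)) * ‖b‖ := by
  set c : ℝ := (Real.sqrt (4 * Real.pi * T))⁻¹ with hc
  set g : ℝ → EuclideanSpace ℂ (Fin n) := fun σ =>
    Lambda T σ • Matrix.toEuclideanCLM (𝕜 := ℂ)
      (NormedSpace.exp (-(Complex.I * (σ : ℂ)) • H)) b with hgdef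
  set φ : ℝ → ℝ := fun σ => (c * (2*T*Real.exp (-σ^2/(4*T)))) * ‖b‖ with hφdef
  have hφ_int : Integrable φ :=
    (((gauss_integrable hT).const_mul (2*T)).const_mul c).mul_const ‖b‖
  have hgnorm : ∀ σ, ‖g σ‖ ≤ φ σ := by
    intro σ
    rw [hgdef]
    simp only
    rw [norm_smul, Real.norm_eq_abs, norm_exp_apply n H hH b σ]
    exact mul_le_mul_of_nonneg_right (abs_lambda_le hT σ) (norm_nonneg b)
  have hg_meas : AEStronglyMeasurable g volume :=
    ((lambda_measurable hT).aestronglyMeasurable).smul (cont_exp_apply n H b).aestronglyMeasurable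
  have hg_int : Integrable g := Integrable.mono' hφ_int hg_meas (Filter.Eventually.of_forall hgnorm)
  have hcompl : (Ioc (-R) R)ᶜ = Iic (-R) ∪ Ioi R := by
    ext x
    simp only [mem_compl_iff, mem_Ioc, not_and_or, not_lt, not_le, mem_union, mem_Iic, mem_Ioi]
  have hsplit : ((∫ σ : ℝ, g σ) - ∫ σ in (-R : ℝ)..R, g σ) = ∫ σ in (Ioc (-R) R)ᶜ, g σ := by
    rw [intervalIntegral.integral_of_le (by linarith : (-R:ℝ) ≤ R)]
    rw [← MeasureTheory.integral_add_compl (measurableSet_Ioc (a := -R) (b := R)) hg_int]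
    abel
  have step1 : ‖(∫ σ : ℝ, g σ) - ∫ σ in (-R : ℝ)..R, g σ‖ ≤ ∫ σ in (Ioc (-R) R)ᶜ, φ σ := by
    rw [hsplit]
    refine le_trans (norm_integral_le_integral_norm _) ?_
    refine setIntegral_mono hg_int.norm.integrableOn hφ_int.integrableOn hgnorm
  have hdisj : Disjoint (Iic (-R)) (Ioi R) := Iic_disjoint_Ioi (by linarith)
  have hunion : ∫ σ in (Ioc (-R) R)ᶜ, φ σ = (∫ σ in Iic (-R), φ σ) + ∫ σ in Ioi R, φ σ := by
    rw [hcompl]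
    exact setIntegral_union hdisj measurableSet_Ioi hφ_int.integrableOn hφ_int.integrableOn
  have hrefl : ∫ σ in Iic (-R), φ σ = ∫ σ in Ioi R, φ σ := by
    have key := integral_comp_neg_Iic (-R) φ
    rw [neg_neg] at key
    rw [← key]
    refine setIntegral_congr_fun measurableSet_Iic (fun x _ => ?_)
    rw [hφdef]
    simp only [neg_sq]
  have hK : ∫ σ in Ioi R, φ σ = (c * (2*T) * ‖b‖) * ∫ σ in Ioi R, Real.exp (-σ^2/(4*T)) := by
    rw [← MeasureTheory.integral_const_mul]
    refine setIntegral_congr_fun measurableSet_Ioi (fun x _ => by rw [hφdef]; ring)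
  have hKpos : 0 ≤ c * (2*T) * ‖b‖ := by positivity
  have htail : ∫ σ in Ioi R, φ σ ≤ (c * (2*T) * ‖b‖) * ((2*T/R) * Real.exp (-R^2/(4*T))) := by
    rw [hK]
    exact mul_le_mul_of_nonneg_left (gauss_tail hT hR) hKpos
  have total : ‖(∫ σ : ℝ, g σ) - ∫ σ in (-R : ℝ)..R, g σ‖ ≤
      2 * ((c * (2*T) * ‖b‖) * ((2*T/R) * Real.exp (-R^2/(4*T)))) := by
    refine le_trans step1 ?_
    rw [hunion, hrefl]
    linarith
  refine le_trans total (le_of_eq ?_)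
  have hsqrt : Real.sqrt (4 * Real.pi * T) = 2 * Real.sqrt Real.pi * Real.sqrt T := by
    rw [show (4:ℝ) * Real.pi * T = (2 * Real.sqrt Real.pi * Real.sqrt T)^2 by
      rw [mul_pow, mul_pow, Real.sq_sqrt Real.pi_nonneg, Real.sq_sqrt hT.le]; norm_num]
    exact Real.sqrt_sq (by positivity)
  have hπ : (0:ℝ) < Real.sqrt Real.pi := Real.sqrt_pos.mpr Real.pi_pos
  have hsT : (0:ℝ) < Real.sqrt T := Real.sqrt_pos.mpr hT
  have hTT : Real.sqrt T * Real.sqrt T = T := Real.mul_self_sqrt hT.le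
  rw [hc, hsqrt]
  field_simp
  linear_combination (-4 * ‖b‖) * hTT
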